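/- Let M be a commutative additive monoid and R a reflexive, symmetric binary relation on M that is compatible with addition (R(a,b) and R(a',b') imply R(a+a', b+b')) and satisfies: R(a,b) and R(b,c) imply R(a+b, c+b). If a ∼ c in the equivalence relation generated by R, then there exists m ∈ M such that R(a+m, c+m). -/
import Mathlib

/-- Two elements equivalent under the equivalence relation generated by a reflexive,
symmetric, addition-compatible relation `R` (with the composition property) become
`R`-related after adding a common element. -/
theorem eqvGen_implies_paired_after_stabilization
    {M : Type*} [AddCommMonoid M] (R : M → M → Prop)
    (hrefl : ∀ a : M, R a a)
    (hsymm : ∀ a b : M, R a b → R b a)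
    (hadd : ∀ a b a' b' : M, R a b → R a' b' → R (a + a') (b + b'))
    (hcomp : ∀ a b c : M, R a b → R b c → R (a + b) (c + b))
    {a c : M} (h : Relation.EqvGen R a c) :
    ∃ m : M, R (a + m) (c + m) := by
  induction h with
  | rel x y hxy => exact ⟨0, by simpa using hxy⟩
  | refl x => exact ⟨0, hrefl _⟩
  | symm x y _ ih => obtain ⟨m, hm⟩ := ih; exact ⟨m, hsymm _ _ hm⟩
  | trans x y z _ _ ih1 ih2 =>
      obtain ⟨m, hm⟩ := ih1
      obtain ⟨n, hn⟩ := ih2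
      have h1 : R (x + m + n) (y + m + n) := hadd _ _ _ _ hm (hrefl n)
      have h2 : R (y + m + n) (z + n + m) := by
        have := hadd _ _ _ _ hn (hrefl m)
        have e : y + n + m = y + m + n := by abel
        rwa [e] at this
      have := hcomp _ _ _ h1 h2
      refine ⟨m + n + (y + m + n), ?_⟩
      have e1 : x + (m + n + (y + m + n)) = x + m + n + (y + m + n) := by abel
      have e2 : z + (m + n + (y + m + n)) = z + n + m + (y + m + n) := by abel
      rwa [e1, e2]
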